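/- The function $\mathbf{f}(\varphi) = \frac{1}{8\sin(\varphi/2)}\left(\frac{2}{\sin^2(\varphi/2)} - 1\right) + \cos\varphi$ satisfies $\mathbf{f}''(\varphi) > 0$ for all $\varphi \in (0, 2\pi)$. -/

import Mathlib

open Real

noncomputable def fbold (φ : ℝ) : ℝ :=
  1 / (8 * Real.sin (φ / 2)) * (2 / Real.sin (φ / 2) ^ 2 - 1) + Real.cos φ

noncomputable def gaux (φ : ℝ) : ℝ :=
  (1/4) * (Real.sin (φ/2) ^ 3)⁻¹ - (1/8) * (Real.sin (φ/2))⁻¹ + Real.cos φ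

noncomputable def G1 (φ : ℝ) : ℝ :=
  (-3/8) * Real.cos (φ/2) / Real.sin (φ/2) ^ 4
    + (1/16) * Real.cos (φ/2) / Real.sin (φ/2) ^ 2 - Real.sin φ

noncomputable def G2 (φ : ℝ) : ℝ :=
  (3/16) / Real.sin (φ/2) ^ 3 + (3/4) * Real.cos (φ/2) ^ 2 / Real.sin (φ/2) ^ 5
    - (1/32) / Real.sin (φ/2) - (1/16) * Real.cos (φ/2) ^ 2 / Real.sin (φ/2) ^ 3
    - Real.cos φ

lemma hs_deriv (φ : ℝ) :
    HasDerivAt (fun x => Real.sin (x/2)) (Real.cos (φ/2) * (1/2)) φ := by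
  have h1 : HasDerivAt (fun x : ℝ => x/2) (1/2 : ℝ) φ := by
    simpa using (hasDerivAt_id φ).div_const 2
  exact (Real.hasDerivAt_sin (φ/2)).comp φ h1

lemma hc_deriv (φ : ℝ) :
    HasDerivAt (fun x => Real.cos (x/2)) (-Real.sin (φ/2) * (1/2)) φ := by
  have h1 : HasDerivAt (fun x : ℝ => x/2) (1/2 : ℝ) φ := by
    simpa using (hasDerivAt_id φ).div_const 2
  exact (Real.hasDerivAt_cos (φ/2)).comp φ h1

lemma gaux_hasDeriv (φ : ℝ) (hsne : Real.sin (φ/2) ≠ 0) :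
    HasDerivAt gaux (G1 φ) φ := by
  have hs := hs_deriv φ
  have h3 : HasDerivAt (fun x => (Real.sin (x/2) ^ 3)⁻¹)
      (-(3 * Real.sin (φ/2) ^ 2 * (Real.cos (φ/2) * (1/2))) / (Real.sin (φ/2) ^ 3) ^ 2) φ := by
    exact (hs.pow 3).inv (pow_ne_zero 3 hsne)
  have h1 : HasDerivAt (fun x => (Real.sin (x/2))⁻¹)
      (-(Real.cos (φ/2) * (1/2)) / Real.sin (φ/2) ^ 2) φ := hs.inv hsne
  have := ((h3.const_mul (1/4 : ℝ)).sub (h1.const_mul (1/8 : ℝ))).add (Real.hasDerivAt_cos φ)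
  refine this.congr_deriv ?_
  unfold G1
  field_simp
  ring

lemma G1_hasDeriv (φ : ℝ) (hsne : Real.sin (φ/2) ≠ 0) :
    HasDerivAt G1 (G2 φ) φ := by
  have hs := hs_deriv φ
  have hc := hc_deriv φ
  have t1 := ((hc.const_mul ((-3:ℝ)/8)).div (hs.pow 4) (pow_ne_zero 4 hsne))
  have t2 := ((hc.const_mul ((1:ℝ)/16)).div (hs.pow 2) (pow_ne_zero 2 hsne))
  have := (t1.add t2).sub (Real.hasDerivAt_sin φ)
  refine this.congr_deriv ?_
  simp only [Pi.pow_apply]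
  unfold G2
  field_simp
  ring

theorem fbold_second_deriv_pos :
    ∀ φ ∈ Set.Ioo (0 : ℝ) (2 * π), 0 < iteratedDeriv 2 fbold φ := by
  intro φ hφ
  obtain ⟨hφ0, hφ2π⟩ := hφ
  have hπ := Real.pi_pos
  have hhalf : φ/2 ∈ Set.Ioo (0:ℝ) π := by constructor <;> [linarith; linarith]
  have hspos : 0 < Real.sin (φ/2) := Real.sin_pos_of_pos_of_lt_pi hhalf.1 hhalf.2
  have hsne : Real.sin (φ/2) ≠ 0 := ne_of_gt hspos
  -- the open set where sin(x/2) ≠ 0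
  have hU : IsOpen {x : ℝ | Real.sin (x/2) ≠ 0} := by
    have : Continuous (fun x : ℝ => Real.sin (x/2)) := by continuity
    exact isOpen_compl_iff.mpr (isClosed_eq this continuous_const) |>.mono le_rfl
  have hmem : {x : ℝ | Real.sin (x/2) ≠ 0} ∈ nhds φ := hU.mem_nhds hsne
  -- fbold = gaux eventually
  have hfg : fbold =ᶠ[nhds φ] gaux := by
    filter_upwards [hmem] with x hx
    unfold fbold gaux
    field_simp
    ring
  -- deriv gaux = G1 eventually
  have hdg : deriv gaux =ᶠ[nhds φ] G1 := by
    filter_upwards [hmem] with x hx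
    exact (gaux_hasDeriv x hx).deriv
  have h2 : iteratedDeriv 2 fbold φ = G2 φ := by
    rw [iteratedDeriv_succ, iteratedDeriv_succ, iteratedDeriv_zero]
    calc deriv (deriv fbold) φ = deriv (deriv gaux) φ := (hfg.deriv).deriv_eq
      _ = deriv G1 φ := hdg.deriv_eq
      _ = G2 φ := (G1_hasDeriv φ hsne).deriv
  rw [h2]
  set s := Real.sin (φ/2) with hsdef
  have hs1 : s ≤ 1 := Real.sin_le_one _
  have hcsq : Real.cos (φ/2) ^ 2 = 1 - s ^ 2 := by
    rw [Real.cos_sq']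
  have hcosφ : Real.cos φ = 1 - 2 * s ^ 2 := by
    have : φ = 2 * (φ/2) := by ring
    rw [this, Real.cos_two_mul, Real.cos_sq']
    ring
  have key : G2 φ = (24 - 20*s^2 + s^4 - 32*s^5 + 64*s^7) / (32 * s^5) := by
    unfold G2
    rw [← hsdef, hcsq, hcosφ]
    field_simp
    ring
  rw [key]
  apply div_pos
  · nlinarith [pow_pos hspos 5, pow_pos hspos 7, sq_nonneg (s - 1), sq_nonneg (s^2 - 1),
      mul_nonneg (mul_nonneg hspos.le hspos.le) (sq_nonneg (s - 1)),
      mul_nonneg (pow_nonneg hspos.le 5) (sq_nonneg (s - 1)),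
      mul_nonneg (pow_nonneg hspos.le 3) (sq_nonneg (s - 1))]
  · positivity
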